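/- The first zero θ_Δ is a nonincreasing function of Δ ∈ [0,∞). More precisely: θ_0 = π/2, θ_Δ = √2 for every Δ ≥ √2, and Δ ↦ θ_Δ is strictly decreasing on [0, √2] (from π/2 to √2). -/

import Mathlib

open MeasureTheory Set Filter

/-- `x` solves the delay equation `x''(t) + p(t)·x(t − τ(t)) = 0` on `I` in the
Carathéodory sense: `x` is differentiable on `I` and on `I` its derivative is an
indefinite integral of `-p(u)·x(u − τ(u))` (so `x` and its derivative are locally
absolutely continuous there, and the equation holds for a.e. `t ∈ I`). -/
def SolvesDDE (p τ x : ℝ → ℝ) (I : Set ℝ) : Prop :=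
  (∀ t ∈ I, HasDerivAt x (deriv x t) t) ∧
  (∀ t₀ ∈ I, ∀ t ∈ I, deriv x t = deriv x t₀ - ∫ u in t₀..t, p u * x (u - τ u))

/-- `r` is the solution `r_Δ` of `r''(t) + r(t − Δ) = 0`, `t ≥ 0`, with `r ≡ 1` on
`(-∞,0]` and `r'(0) = 0` (the derivative is an indefinite integral of `-r(· - Δ)`). -/
def IsDelayCosine (Δ : ℝ) (r : ℝ → ℝ) : Prop :=
  (∀ t ≤ (0:ℝ), r t = 1) ∧
  (∀ t, 0 ≤ t → HasDerivAt r (deriv r t) t) ∧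
  (∀ t, 0 ≤ t → deriv r t = - ∫ u in (0:ℝ)..t, r (u - Δ))

/-- `θ` is the first zero of `r` on `[0,∞)`. -/
def IsFirstZero (r : ℝ → ℝ) (θ : ℝ) : Prop :=
  0 < θ ∧ r θ = 0 ∧ ∀ t, 0 ≤ t → t < θ → 0 < r t

/-- `g(w) = ρ·r(θ − w − Δ)·χ_{[−Δ,0]}(w)`. -/
noncomputable def gAux (ρ Δ θ : ℝ) (r : ℝ → ℝ) : ℝ → ℝ :=
  (Set.Icc (-Δ) (0:ℝ)).indicator fun w => ρ * r (θ - w - Δ)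

/-- The double integral `∫_{-c}^0 (∫_{-c}^s max (β w) (g w) dw) ds`. -/
noncomputable def doubleInt (g β : ℝ → ℝ) (c : ℝ) : ℝ :=
  ∫ s in (-c)..(0:ℝ), ∫ w in (-c)..s, max (β w) (g w)

/-- The recursively defined sequences `β_n`, `ϖ_n` associated with `g`. -/
def IsBetaSeq (g : ℝ → ℝ) (β : ℕ → ℝ → ℝ) (ϖ : ℕ → ℝ) : Prop :=
  (∀ t ≤ (0:ℝ), β 0 t = 1) ∧
  ∀ n : ℕ,
    (0 < ϖ n ∧ doubleInt g (β n) (ϖ n) = 1) ∧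
    (∀ t, t ≤ -ϖ n → β (n+1) t = 1) ∧
    (∀ t, -ϖ n ≤ t → t ≤ 0 →
      β (n+1) t = 1 - ∫ s in (-ϖ n)..t, ∫ w in (-ϖ n)..s, max (β n w) (g w))

/-- `x` has a locally absolutely continuous derivative on `[a,b]`, with a.e. second
derivative `w`. -/
def HasSecondDerivAEOn (x w : ℝ → ℝ) (a b : ℝ) : Prop :=
  (∀ t ∈ Set.Icc a b, HasDerivAt x (deriv x t) t) ∧
  (∀ t ∈ Set.Icc a b, deriv x t = deriv x a + ∫ u in a..t, w u)

namespace ThetaMono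

noncomputable def P (Δ : ℝ) (r : ℝ → ℝ) (t : ℝ) : ℝ := ∫ u in (0:ℝ)..t, r (u - Δ)

variable {Δ θ : ℝ} {r : ℝ → ℝ}

lemma cont_r (h : IsDelayCosine Δ r) : Continuous r := by
  rw [continuous_iff_continuousAt]
  intro t
  rcases lt_or_ge t 0 with ht | ht
  · have he : (fun _ : ℝ => (1:ℝ)) =ᶠ[nhds t] r := by
      filter_upwards [Iio_mem_nhds ht] with s hs
      exact (h.1 s (le_of_lt hs)).symm
    exact continuousAt_const.congr he
  · exact (h.2.1 t ht).continuousAt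

lemma cont_shift (h : IsDelayCosine Δ r) : Continuous (fun u => r (u - Δ)) :=
  (cont_r h).comp (continuous_id.sub continuous_const)

lemma hasDerivP (h : IsDelayCosine Δ r) (t : ℝ) :
    HasDerivAt (P Δ r) (r (t - Δ)) t :=
  intervalIntegral.integral_hasDerivAt_right ((cont_shift h).intervalIntegrable _ _)
    ((cont_shift h).stronglyMeasurableAtFilter _ _) (cont_shift h).continuousAt

lemma contP (h : IsDelayCosine Δ r) : Continuous (P Δ r) := by
  rw [continuous_iff_continuousAt]
  exact fun t => (hasDerivP h t).continuousAt

lemma rder (h : IsDelayCosine Δ r) (t : ℝ) (ht : 0 ≤ t) :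
    HasDerivAt r (-(P Δ r t)) t := by
  have := h.2.1 t ht
  rwa [h.2.2 t ht] at this

lemma rFTC (h : IsDelayCosine Δ r) {a b : ℝ} (ha : 0 ≤ a) (hb : 0 ≤ b) :
    r b = r a + ∫ s in a..b, -(P Δ r s) := by
  have hint : ∫ s in a..b, -(P Δ r s) = r b - r a := by
    apply intervalIntegral.integral_eq_sub_of_hasDerivAt
    · intro x hx
      have h0 : (0:ℝ) ≤ min a b := le_min ha hb
      exact rder h x (le_trans h0 hx.1)
    · exact ((contP h).neg).intervalIntegrable _ _
  linarith

lemma r0 (h : IsDelayCosine Δ r) : r 0 = 1 := h.1 0 le_rfl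

lemma rnn (h : IsDelayCosine Δ r) (hz : IsFirstZero r θ) :
    ∀ t, t ≤ θ → 0 ≤ r t := by
  intro t ht
  rcases le_or_gt t 0 with h0 | h0
  · rw [h.1 t h0]; norm_num
  · rcases lt_or_eq_of_le ht with hlt | rfl
    · exact (hz.2.2 t h0.le hlt).le
    · exact le_of_eq hz.2.1.symm

lemma Pnn (hΔ : 0 ≤ Δ) (h : IsDelayCosine Δ r) (hz : IsFirstZero r θ)
    {t : ℝ} (h0 : 0 ≤ t) (ht : t ≤ θ) : 0 ≤ P Δ r t :=
  intervalIntegral.integral_nonneg h0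
    (fun u hu => rnn h hz _ (by cases hu; linarith))

lemma rle1 (hΔ : 0 ≤ Δ) (h : IsDelayCosine Δ r) (hz : IsFirstZero r θ)
    {t : ℝ} (ht : t ≤ θ) : r t ≤ 1 := by
  rcases le_or_gt t 0 with h0 | h0
  · exact le_of_eq (h.1 t h0)
  · have hf := rFTC h (le_refl 0) h0.le
    rw [r0 h, intervalIntegral.integral_neg] at hf
    have hnn : 0 ≤ ∫ s in (0:ℝ)..t, P Δ r s :=
      intervalIntegral.integral_nonneg h0.le
        (fun s hs => Pnn hΔ h hz hs.1 (hs.2.trans ht))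
    linarith

lemma rmono (hΔ : 0 ≤ Δ) (h : IsDelayCosine Δ r) (hz : IsFirstZero r θ)
    {s t : ℝ} (hst : s ≤ t) (ht : t ≤ θ) : r t ≤ r s := by
  rcases le_or_gt s 0 with h0 | h0
  · rw [h.1 s h0]; exact rle1 hΔ h hz ht
  · have hf := rFTC h h0.le (h0.le.trans hst)
    rw [intervalIntegral.integral_neg] at hf
    have hnn : 0 ≤ ∫ u in s..t, P Δ r u :=
      intervalIntegral.integral_nonneg hst
        (fun u hu => Pnn hΔ h hz (h0.le.trans hu.1) (hu.2.trans ht))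
    linarith

lemma Ppos (hΔ : 0 ≤ Δ) (h : IsDelayCosine Δ r) (hz : IsFirstZero r θ)
    {t : ℝ} (h0 : 0 < t) (ht : t ≤ θ) : 0 < P Δ r t := by
  have hlt : (∫ u in (0:ℝ)..t, (0:ℝ)) < ∫ u in (0:ℝ)..t, r (u - Δ) := by
    apply intervalIntegral.integral_lt_integral_of_continuousOn_of_le_of_exists_lt h0
      continuousOn_const (cont_shift h).continuousOn
    · intro x hx
      exact rnn h hz _ (by cases hx; linarith)
    · exact ⟨0, ⟨le_rfl, h0.le⟩, by rw [h.1 _ (by linarith)]; norm_num⟩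
  simpa only [P, intervalIntegral.integral_zero] using hlt

lemma rlt1 (hΔ : 0 ≤ Δ) (h : IsDelayCosine Δ r) (hz : IsFirstZero r θ)
    {t : ℝ} (h0 : 0 < t) (ht : t ≤ θ) : r t < 1 := by
  have hf := rFTC h (le_refl 0) h0.le
  rw [r0 h, intervalIntegral.integral_neg] at hf
  have hlt : (∫ s in (0:ℝ)..t, (0:ℝ)) < ∫ s in (0:ℝ)..t, P Δ r s := by
    apply intervalIntegral.integral_lt_integral_of_continuousOn_of_le_of_exists_lt h0
      continuousOn_const (contP h).continuousOn
    · exact fun s hs => Pnn hΔ h hz hs.1.le (hs.2.trans ht)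
    · exact ⟨t, ⟨h0.le, le_rfl⟩, Ppos hΔ h hz h0 ht⟩
  rw [intervalIntegral.integral_zero] at hlt
  linarith

lemma Ple (hΔ : 0 ≤ Δ) (h : IsDelayCosine Δ r) (hz : IsFirstZero r θ)
    {t : ℝ} (h0 : 0 ≤ t) (ht : t ≤ θ) : P Δ r t ≤ t := by
  have := intervalIntegral.integral_mono_on (μ := volume) (g := fun _ => (1:ℝ)) h0
    ((cont_shift h).intervalIntegrable _ _) (continuous_const.intervalIntegrable _ _)
    (fun u hu => rle1 hΔ h hz (show u - Δ ≤ θ by cases hu; linarith))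
  simpa [P] using this

lemma rge (hΔ : 0 ≤ Δ) (h : IsDelayCosine Δ r) (hz : IsFirstZero r θ)
    {t : ℝ} (h0 : 0 ≤ t) (ht : t ≤ θ) : 1 - t^2/2 ≤ r t := by
  have hf := rFTC h (le_refl 0) h0
  rw [r0 h, intervalIntegral.integral_neg] at hf
  have hle : (∫ s in (0:ℝ)..t, P Δ r s) ≤ ∫ s in (0:ℝ)..t, s := by
    apply intervalIntegral.integral_mono_on (μ := volume) h0 ((contP h).intervalIntegrable _ _)
      (continuous_id.intervalIntegrable _ _)
    exact fun s hs => Ple hΔ h hz hs.1 (hs.2.trans ht)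
  rw [integral_id] at hle
  rw [hf]; ring_nf; ring_nf at hle; nlinarith

lemma theta_ge (hΔ : 0 ≤ Δ) (h : IsDelayCosine Δ r) (hz : IsFirstZero r θ) :
    Real.sqrt 2 ≤ θ := by
  have := rge hΔ h hz hz.1.le (le_refl θ)
  rw [hz.2.1] at this
  have h2 : (2:ℝ) ≤ θ^2 := by nlinarith
  calc Real.sqrt 2 ≤ Real.sqrt (θ^2) := Real.sqrt_le_sqrt h2
    _ = θ := Real.sqrt_sq hz.1.le

lemma P_of_le_delta (h : IsDelayCosine Δ r) {t : ℝ} (h0 : 0 ≤ t) (ht : t ≤ Δ) :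
    P Δ r t = t := by
  have : P Δ r t = ∫ u in (0:ℝ)..t, (1:ℝ) := by
    apply intervalIntegral.integral_congr
    intro u hu
    rw [uIcc_of_le h0] at hu
    exact h.1 _ (by cases hu; linarith)
  simpa using this

lemma r_of_le_delta (h : IsDelayCosine Δ r) {t : ℝ} (h0 : 0 ≤ t) (ht : t ≤ Δ) :
    r t = 1 - t^2/2 := by
  have hf := rFTC h (le_refl 0) h0
  rw [r0 h] at hf
  have : (∫ s in (0:ℝ)..t, -(P Δ r s)) = ∫ s in (0:ℝ)..t, -s := by
    apply intervalIntegral.integral_congr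
    intro s hs
    rw [uIcc_of_le h0] at hs
    show -P Δ r s = -s
    rw [P_of_le_delta h hs.1 (hs.2.trans ht)]
  rw [this, intervalIntegral.integral_neg, integral_id] at hf
  rw [hf]; ring

lemma theta_eq_of_ge (hΔ : 0 ≤ Δ) (h : IsDelayCosine Δ r) (hz : IsFirstZero r θ)
    (h2 : Real.sqrt 2 ≤ Δ) : θ = Real.sqrt 2 := by
  refine le_antisymm ?_ (theta_ge hΔ h hz)
  by_contra hcon
  push_neg at hcon
  have := hz.2.2 (Real.sqrt 2) (Real.sqrt_nonneg 2) hcon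
  rw [r_of_le_delta h (Real.sqrt_nonneg 2) h2, Real.sq_sqrt (by norm_num : (0:ℝ) ≤ 2)] at this
  norm_num at this

lemma Plt (hΔ : 0 ≤ Δ) (h : IsDelayCosine Δ r) (hz : IsFirstZero r θ)
    {t : ℝ} (h0 : Δ < t) (ht : t ≤ θ) : P Δ r t < t := by
  have h0' : 0 < t := lt_of_le_of_lt hΔ h0
  have hlt : (∫ u in (0:ℝ)..t, r (u - Δ)) < ∫ u in (0:ℝ)..t, (1:ℝ) := by
    apply intervalIntegral.integral_lt_integral_of_continuousOn_of_le_of_exists_lt h0'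
      (cont_shift h).continuousOn continuousOn_const
    · intro x hx
      exact rle1 hΔ h hz (show x - Δ ≤ θ by cases hx; linarith)
    · refine ⟨(Δ + t)/2, ⟨by linarith, by linarith⟩, ?_⟩
      exact rlt1 hΔ h hz (by linarith) (by linarith)
  simpa [P] using hlt

lemma theta_gt (hΔ : 0 ≤ Δ) (h : IsDelayCosine Δ r) (hz : IsFirstZero r θ)
    (h2 : Δ < Real.sqrt 2) : Real.sqrt 2 < θ := by
  have hΔθ : Δ < θ := lt_of_lt_of_le h2 (theta_ge hΔ h hz)
  have hf := rFTC h (le_refl 0) hz.1.le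
  rw [r0 h, hz.2.1, intervalIntegral.integral_neg] at hf
  have hlt : (∫ s in (0:ℝ)..θ, P Δ r s) < ∫ s in (0:ℝ)..θ, s := by
    apply intervalIntegral.integral_lt_integral_of_continuousOn_of_le_of_exists_lt hz.1
      (contP h).continuousOn (continuous_id.continuousOn)
    · exact fun s hs => Ple hΔ h hz hs.1.le hs.2
    · refine ⟨(Δ + θ)/2, ⟨by linarith [hΔ, hz.1], by linarith⟩, ?_⟩
      exact Plt hΔ h hz (by linarith) (by linarith)
  rw [integral_id] at hlt
  have h2' : (2:ℝ) < θ^2 := by nlinarith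
  calc Real.sqrt 2 < Real.sqrt (θ^2) := Real.sqrt_lt_sqrt (by norm_num) h2'
    _ = θ := Real.sqrt_sq hz.1.le


section Key

variable {Δ₁ Δ₂ θ₁ θ₂ : ℝ} {r₁ r₂ : ℝ → ℝ}

lemma key (hΔ₁ : 0 ≤ Δ₁) (h12 : Δ₁ < Δ₂) (hΔ₂ : Δ₂ < Real.sqrt 2)
    (h1 : IsDelayCosine Δ₁ r₁) (h2 : IsDelayCosine Δ₂ r₂)
    (hz1 : IsFirstZero r₁ θ₁) (hz2 : IsFirstZero r₂ θ₂) : θ₂ < θ₁ := by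
  have hΔ₂' : 0 ≤ Δ₂ := hΔ₁.trans h12.le
  set T := min θ₁ θ₂ with hTdef
  have hT1 : T ≤ θ₁ := min_le_left _ _
  have hT2 : T ≤ θ₂ := min_le_right _ _
  have hTs : Real.sqrt 2 ≤ T := le_min (theta_ge hΔ₁ h1 hz1) (theta_ge hΔ₂' h2 hz2)
  have hΔ₂T : Δ₂ < T := lt_of_lt_of_le hΔ₂ hTs
  set W : ℝ → ℝ := fun t => (-(P Δ₂ r₂ t)) * r₁ t - (-(P Δ₁ r₁ t)) * r₂ t with hWdef
  set E : ℝ → ℝ := fun t => r₁ (t - Δ₁) * r₂ t - r₂ (t - Δ₂) * r₁ t with hEdef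
  have hc1 : Continuous r₁ := cont_r h1
  have hc2 : Continuous r₂ := cont_r h2
  have hWc : Continuous W :=
    (((contP h2).neg).mul hc1).sub (((contP h1).neg).mul hc2)
  have hEc : Continuous E :=
    ((hc1.comp (continuous_id.sub continuous_const)).mul hc2).sub
      ((hc2.comp (continuous_id.sub continuous_const)).mul hc1)
  have hWder : ∀ t, 0 ≤ t → HasDerivAt W (E t) t := by
    intro t ht
    have hr1 := rder h1 t ht
    have hr2 := rder h2 t ht
    have hp1 : HasDerivAt (fun s => -(P Δ₁ r₁ s)) (-(r₁ (t - Δ₁))) t := (hasDerivP h1 t).neg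
    have hp2 : HasDerivAt (fun s => -(P Δ₂ r₂ s)) (-(r₂ (t - Δ₂))) t := (hasDerivP h2 t).neg
    have hprod := (hp2.mul hr1).sub (hp1.mul hr2)
    have hE' : E t = -r₂ (t - Δ₂) * r₁ t + -P Δ₂ r₂ t * -P Δ₁ r₁ t - (-r₁ (t - Δ₁) * r₂ t + -P Δ₁ r₁ t * -P Δ₂ r₂ t) := by
      simp only [hEdef]
      ring
    rw [hE']
    exact hprod
  have hWFTC : ∀ a b, 0 ≤ a → a ≤ b → W b = W a + ∫ s in a..b, E s := by
    intro a b ha hab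
    have hint : ∫ s in a..b, E s = W b - W a := by
      apply intervalIntegral.integral_eq_sub_of_hasDerivAt
      · intro x hx
        rw [uIcc_of_le hab] at hx
        exact hWder x (ha.trans hx.1)
      · exact hEc.intervalIntegrable _ _
    linarith
  have hW0 : ∀ t, 0 ≤ t → t ≤ Δ₁ → W t = 0 := by
    intro t h0 hd
    have e1 : P Δ₁ r₁ t = t := P_of_le_delta h1 h0 hd
    have e2 : P Δ₂ r₂ t = t := P_of_le_delta h2 h0 (hd.trans h12.le)
    have e3 : r₁ t = 1 - t^2/2 := r_of_le_delta h1 h0 hd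
    have e4 : r₂ t = 1 - t^2/2 := r_of_le_delta h2 h0 (hd.trans h12.le)
    simp only [hWdef, e1, e2, e3, e4]
    ring
  have hEneg : ∀ s, Δ₁ < s → s ≤ Δ₂ → E s < 0 := by
    intro s hs1 hs2
    have h0s : 0 ≤ s := hΔ₁.trans hs1.le
    have hsθ1 : s ≤ θ₁ := hs2.trans (hΔ₂.le.trans (theta_ge hΔ₁ h1 hz1))
    have hr2s : r₂ s = 1 - s^2/2 := r_of_le_delta h2 h0s hs2
    have h2z : r₂ (s - Δ₂) = 1 := h2.1 _ (by linarith)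
    have hge : 1 - s^2/2 ≤ r₁ s := rge hΔ₁ h1 hz1 h0s hsθ1
    have hlt : r₁ (s - Δ₁) < 1 := rlt1 hΔ₁ h1 hz1 (by linarith) (by linarith)
    have hs2' : s < Real.sqrt 2 := lt_of_le_of_lt hs2 hΔ₂
    have hsq : s^2 < 2 := by
      nlinarith [Real.sq_sqrt (show (0:ℝ) ≤ 2 by norm_num), Real.sqrt_nonneg 2]
    have hpos : 0 < r₂ s := by rw [hr2s]; nlinarith
    simp only [hEdef, h2z, one_mul]
    nlinarith
  have hWneg_small : ∀ t, Δ₁ < t → t ≤ Δ₂ → W t < 0 := by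
    intro t h1t h2t
    have hft := hWFTC Δ₁ t hΔ₁ h1t.le
    rw [hW0 Δ₁ hΔ₁ le_rfl] at hft
    have hlt : (∫ s in Δ₁..t, E s) < ∫ s in Δ₁..t, (0:ℝ) := by
      apply intervalIntegral.integral_lt_integral_of_continuousOn_of_le_of_exists_lt h1t
        hEc.continuousOn continuousOn_const
      · exact fun x hx => (hEneg x hx.1 (hx.2.trans h2t)).le
      · exact ⟨t, ⟨h1t.le, le_rfl⟩, hEneg t h1t h2t⟩
    rw [intervalIntegral.integral_zero] at hlt
    linarith
  have hr1pos : ∀ x, 0 ≤ x → x < T → 0 < r₁ x :=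
    fun x hx hxT => hz1.2.2 x hx (lt_of_lt_of_le hxT hT1)
  have hRatio : ∀ s, 0 < s → s < T → (∀ σ, 0 < σ → σ < s → W σ ≤ 0) →
      ∀ a b, 0 ≤ a → a ≤ b → b ≤ s → r₂ b * r₁ a ≤ r₂ a * r₁ b := by
    intro s hs0 hsT hW a b ha hab hbs
    have hpos : ∀ x ∈ Icc (0:ℝ) s, 0 < r₁ x :=
      fun x hx => hr1pos x hx.1 (lt_of_le_of_lt hx.2 hsT)
    have hder : ∀ x ∈ Ioo (0:ℝ) s, HasDerivAt (fun t => r₂ t / r₁ t) (W x / (r₁ x)^2) x := by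
      intro x hx
      have h1x := rder h1 x hx.1.le
      have h2x := rder h2 x hx.1.le
      have hne : r₁ x ≠ 0 := (hpos x ⟨hx.1.le, hx.2.le⟩).ne'
      have hdiv := h2x.div h1x hne
      have hW' : W x / r₁ x ^ 2 = (-P Δ₂ r₂ x * r₁ x - r₂ x * -P Δ₁ r₁ x) / r₁ x ^ 2 := by
        simp only [hWdef]
        ring
      rw [hW']
      exact hdiv
    have hanti : AntitoneOn (fun t => r₂ t / r₁ t) (Icc 0 s) := by
      apply antitoneOn_of_deriv_nonpos (convex_Icc 0 s)
      · exact hc2.continuousOn.div hc1.continuousOn (fun x hx => (hpos x hx).ne')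
      · intro x hx
        rw [interior_Icc] at hx
        exact ((hder x hx).differentiableAt).differentiableWithinAt
      · intro x hx
        rw [interior_Icc] at hx
        rw [(hder x hx).deriv]
        exact div_nonpos_of_nonpos_of_nonneg (hW x hx.1 hx.2) (sq_nonneg _)
    have hfb := hanti ⟨ha, hab.trans hbs⟩ ⟨ha.trans hab, hbs⟩ hab
    rw [div_le_div_iff₀ (hpos b ⟨ha.trans hab, hbs⟩) (hpos a ⟨ha, hab.trans hbs⟩)] at hfb
    exact hfb
  have hEcalc : ∀ s, Δ₂ ≤ s → s < T → (∀ σ, 0 < σ → σ < s → W σ ≤ 0) → E s ≤ 0 := by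
    intro s hs2 hsT hW
    have hs0 : 0 < s := lt_of_lt_of_le (lt_of_le_of_lt hΔ₁ h12) hs2
    have hratio := hRatio s hs0 hsT hW (s - Δ₂) s (by linarith) (by linarith) le_rfl
    have hmono : r₁ (s - Δ₁) ≤ r₁ (s - Δ₂) :=
      rmono hΔ₁ h1 hz1 (by linarith) (by linarith [hT1])
    have hr2nn : 0 ≤ r₂ s := rnn h2 hz2 s (by linarith [hT2])
    simp only [hEdef]
    nlinarith
  have hmain : ∀ t, 0 ≤ t → t < T → W t ≤ 0 := by
    by_contra hcon
    push_neg at hcon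
    obtain ⟨t₁, ht₁0, ht₁T, ht₁W⟩ := hcon
    set B := {t : ℝ | t ∈ Icc 0 t₁ ∧ 0 < W t} with hB
    have hne : t₁ ∈ B := ⟨⟨ht₁0, le_rfl⟩, ht₁W⟩
    have hbdd : BddBelow B := ⟨0, fun x hx => hx.1.1⟩
    set c := sInf B with hc
    have hcB : ∀ b ∈ B, c ≤ b := fun b hb => csInf_le hbdd hb
    have hc0 : 0 ≤ c := le_csInf ⟨t₁, hne⟩ fun b hb => hb.1.1
    have hct₁ : c ≤ t₁ := hcB t₁ hne
    have hlow : ∀ σ, 0 ≤ σ → σ < c → W σ ≤ 0 := by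
      intro σ h0 hσ
      by_contra hpos
      push_neg at hpos
      exact absurd (hcB σ ⟨⟨h0, hσ.le.trans hct₁⟩, hpos⟩) (not_le.2 hσ)
    have hBgt : ∀ b ∈ B, Δ₂ < b := by
      intro b hb
      rcases le_or_gt b Δ₁ with hle | hgt
      · have h2b := hb.2
        rw [hW0 b hb.1.1 hle] at h2b
        exact absurd h2b (lt_irrefl 0)
      rcases le_or_gt b Δ₂ with hle' | hgt'
      · exact absurd hb.2 (not_lt.2 (hWneg_small b hgt hle').le)
      · exact hgt'
    have hcΔ₂ : Δ₂ ≤ c := le_csInf ⟨t₁, hne⟩ fun b hb => (hBgt b hb).le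
    have hcT : c < T := lt_of_le_of_lt hct₁ ht₁T
    have hWc_nonneg : 0 ≤ W c := by
      by_contra hneg
      push_neg at hneg
      have hpre : W ⁻¹' (Iio 0) ∈ nhds c :=
        hWc.continuousAt.preimage_mem_nhds (Iio_mem_nhds hneg)
      obtain ⟨ε, hε, hball⟩ := Metric.mem_nhds_iff.1 hpre
      obtain ⟨b, hbB, hb⟩ := (csInf_lt_iff hbdd ⟨t₁, hne⟩).1
        (show sInf B < c + ε by rw [← hc]; linarith)
      have hbc : c ≤ b := hcB b hbB
      have : W b < 0 := hball (by
        rw [Metric.mem_ball, Real.dist_eq, abs_of_nonneg (sub_nonneg.2 hbc)]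
        linarith)
      linarith [hbB.2]
    have hWcneg : W c < 0 := by
      have hWΔ₂ : W Δ₂ < 0 := hWneg_small Δ₂ h12 le_rfl
      rcases eq_or_lt_of_le hcΔ₂ with he | hlt2
      · rw [← he]; exact hWΔ₂
      · have hft := hWFTC Δ₂ c hΔ₂' hlt2.le
        have hint : (∫ s in Δ₂..c, E s) ≤ ∫ s in Δ₂..c, (0:ℝ) := by
          apply intervalIntegral.integral_mono_on (μ := volume) hlt2.le
            (hEc.intervalIntegrable _ _) (continuous_const.intervalIntegrable _ _)
          intro s hs
          exact hEcalc s hs.1 (lt_of_le_of_lt hs.2 hcT)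
            (fun σ hσ0 hσs => hlow σ hσ0.le (lt_of_lt_of_le hσs hs.2))
        rw [intervalIntegral.integral_zero] at hint
        linarith
    linarith
  have hWΔ₂ : W Δ₂ < 0 := hWneg_small Δ₂ h12 le_rfl
  have hWlate : ∀ t, Δ₂ ≤ t → t < T → W t ≤ W Δ₂ := by
    intro t h2t htT
    rcases eq_or_lt_of_le h2t with he | hlt2
    · rw [← he]
    · have hft := hWFTC Δ₂ t hΔ₂' hlt2.le
      have hint : (∫ s in Δ₂..t, E s) ≤ ∫ s in Δ₂..t, (0:ℝ) := by
        apply intervalIntegral.integral_mono_on (μ := volume) hlt2.le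
          (hEc.intervalIntegrable _ _) (continuous_const.intervalIntegrable _ _)
        intro s hs
        exact hEcalc s hs.1 (lt_of_le_of_lt hs.2 htT)
          (fun σ hσ0 hσs => hmain σ hσ0.le (lt_of_lt_of_le hσs (hs.2.trans htT.le)))
      rw [intervalIntegral.integral_zero] at hint
      linarith
  have hWT : W T ≤ W Δ₂ := by
    have htend : Tendsto W (nhdsWithin T (Iio T)) (nhds (W T)) :=
      (hWc.tendsto T).mono_left nhdsWithin_le_nhds
    apply le_of_tendsto htend
    filter_upwards [Ioo_mem_nhdsLT_of_mem (show T ∈ Ioc Δ₂ T from ⟨hΔ₂T, le_rfl⟩)] with x hx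
    exact hWlate x hx.1.le hx.2
  have hw : θ₂ ≤ θ₁ := by
    by_contra hcon
    push_neg at hcon
    have hTθ₁ : T = θ₁ := min_eq_left hcon.le
    have hWθ₁ : W θ₁ = P Δ₁ r₁ θ₁ * r₂ θ₁ := by
      simp only [hWdef, hz1.2.1]
      ring
    have hpos : 0 < W θ₁ := by
      rw [hWθ₁]
      exact mul_pos (Ppos hΔ₁ h1 hz1 hz1.1 le_rfl) (hz2.2.2 θ₁ hz1.1.le hcon)
    rw [hTθ₁] at hWT
    linarith
  rcases lt_or_eq_of_le hw with hlt | heq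
  · exact hlt
  · exfalso
    have hTeq : T = θ₂ := min_eq_right hw
    have hr1z : r₁ θ₂ = 0 := by rw [heq]; exact hz1.2.1
    have hWT0 : W T = 0 := by
      rw [hTeq]
      simp only [hWdef, hz2.2.1, hr1z]
      ring
    linarith

end Key


lemma theta_zero {r : ℝ → ℝ} {θ : ℝ} (h : IsDelayCosine 0 r) (hz : IsFirstZero r θ) :
    θ = Real.pi / 2 := by
  have hc := cont_r h
  have hcos : ∀ t, 0 ≤ t → r t = Real.cos t := by
    intro t ht
    have hlip : ∀ s : ℝ, LipschitzWith 1 (fun p : ℝ × ℝ => (p.2, -p.1)) := by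
      intro s
      have h2 := (LipschitzWith.prod_snd (α := ℝ) (β := ℝ))
      have h1 := (LipschitzWith.prod_fst (α := ℝ) (β := ℝ)).neg
      have := h2.prodMk h1
      simpa [max_self] using this
    have keyEq : Set.EqOn (fun s => (r s, -(P 0 r s))) (fun s => (Real.cos s, -Real.sin s))
        (Icc 0 (t+1)) := by
      apply ODE_solution_unique (v := fun _ p => (p.2, -p.1)) hlip
      · exact (hc.prodMk (contP h).neg).continuousOn
      · intro s hs
        have hd1 : HasDerivAt r (-(P 0 r s)) s := rder h s hs.1
        have hd2 : HasDerivAt (fun u => -(P 0 r u)) (-(r s)) s := by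
          have := (hasDerivP h s).neg
          rw [sub_zero] at this
          exact this
        exact (hd1.prodMk hd2).hasDerivWithinAt
      · exact (Real.continuous_cos.prodMk Real.continuous_sin.neg).continuousOn
      · intro s hs
        have hd1 : HasDerivAt Real.cos (-Real.sin s) s := Real.hasDerivAt_cos s
        have hd2 : HasDerivAt (fun u => -Real.sin u) (-Real.cos s) s := (Real.hasDerivAt_sin s).neg
        exact (hd1.prodMk hd2).hasDerivWithinAt
      · simp [P, r0 h]
    have := keyEq ⟨ht, by linarith⟩
    simpa using congrArg Prod.fst this
  have hpos := Real.pi_pos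
  have h0 : r (Real.pi/2) = 0 := by
    rw [hcos _ (by linarith)]
    exact Real.cos_pi_div_two
  have hle : θ ≤ Real.pi/2 := by
    by_contra hcon
    push_neg at hcon
    have := hz.2.2 _ (by linarith) hcon
    rw [h0] at this
    exact lt_irrefl 0 this
  have hge : Real.pi/2 ≤ θ := by
    by_contra hcon
    push_neg at hcon
    have hcosθ : 0 < Real.cos θ := Real.cos_pos_of_mem_Ioo ⟨by linarith [hz.1], hcon⟩
    rw [← hcos θ hz.1.le, hz.2.1] at hcosθ
    exact lt_irrefl 0 hcosθ
  linarith

end ThetaMono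

/-- monotonicity of `Δ ↦ θ_Δ`. -/
theorem theta_monotonicity
    (r : ℝ → ℝ → ℝ) (θ : ℝ → ℝ)
    (hr : ∀ Δ, 0 ≤ Δ → IsDelayCosine Δ (r Δ))
    (hθ : ∀ Δ, 0 ≤ Δ → IsFirstZero (r Δ) (θ Δ)) :
    AntitoneOn θ (Set.Ici 0) ∧
    θ 0 = Real.pi / 2 ∧
    (∀ Δ, Real.sqrt 2 ≤ Δ → θ Δ = Real.sqrt 2) ∧
    StrictAntiOn θ (Set.Icc 0 (Real.sqrt 2)) := by
  have sqrt2_nonneg : (0:ℝ) ≤ Real.sqrt 2 := Real.sqrt_nonneg 2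
  have hbig : ∀ Δ, Real.sqrt 2 ≤ Δ → θ Δ = Real.sqrt 2 := by
    intro Δ hΔ
    have h0 : 0 ≤ Δ := sqrt2_nonneg.trans hΔ
    exact ThetaMono.theta_eq_of_ge h0 (hr Δ h0) (hθ Δ h0) hΔ
  have hkey : ∀ a b, 0 ≤ a → a < b → b ≤ Real.sqrt 2 → θ b < θ a := by
    intro a b ha hab hb
    rcases lt_or_eq_of_le hb with hlt | heq
    · exact ThetaMono.key ha hab hlt (hr a ha) (hr b (ha.trans hab.le))
        (hθ a ha) (hθ b (ha.trans hab.le))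
    · rw [hbig b heq.ge]
      exact ThetaMono.theta_gt ha (hr a ha) (hθ a ha) (heq ▸ hab)
  refine ⟨?_, ThetaMono.theta_zero (hr 0 le_rfl) (hθ 0 le_rfl), hbig, ?_⟩
  · intro a ha b hb hab
    rcases eq_or_lt_of_le hab with rfl | hlt
    · exact le_rfl
    rcases le_or_gt (Real.sqrt 2) b with h2b | h2b
    · rw [hbig b h2b]
      exact ThetaMono.theta_ge ha (hr a ha) (hθ a ha)
    · exact (hkey a b ha hlt h2b.le).le
  · intro a ha b hb hab
    exact hkey a b ha.1 hab hb.2
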